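/- Let c ≥ 0, let α : (−ε, ε) → (0, π/2) and s, t : (−ε, ε) → (0, ∞) be differentiable with s/t constant, and set H an antiderivative of h(α) = (cosα·sinα)^{3/2}. Then the function F(τ) = 2·sin^{5/2}(α(τ))·cos^{1/2}(α(τ))·s(τ)·t(τ) + 5c·(s(τ)t(τ)/(s(τ)²+t(τ)²))·H(α(τ)) is constant in τ if and only if the ODE 5(c+r²)cos²α·s·t·α' − (s²+t²)·s·t·sin²α·α' + 2sinα·cosα·(s²+t²)·(s·t' + t·s') = 0 holds for all τ, where r² = s² + t². -/

import Mathlib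

open Real Set

theorem first_integral_F_iff_ode
    (c ε : ℝ) (hc : 0 ≤ c) (hε : 0 < ε)
    (α s t : ℝ → ℝ) (H : ℝ → ℝ)
    (hα : ∀ τ ∈ Ioo (-ε) ε, α τ ∈ Ioo 0 (π/2))
    (hs : ∀ τ ∈ Ioo (-ε) ε, 0 < s τ)
    (ht : ∀ τ ∈ Ioo (-ε) ε, 0 < t τ)
    (hαd : ∀ τ ∈ Ioo (-ε) ε, DifferentiableAt ℝ α τ)
    (hsd : ∀ τ ∈ Ioo (-ε) ε, DifferentiableAt ℝ s τ)
    (htd : ∀ τ ∈ Ioo (-ε) ε, DifferentiableAt ℝ t τ)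
    (hratio : ∀ τ₁ ∈ Ioo (-ε) ε, ∀ τ₂ ∈ Ioo (-ε) ε, s τ₁ / t τ₁ = s τ₂ / t τ₂)
    (hH : ∀ x ∈ Ioo 0 (π/2), HasDerivAt H ((cos x * sin x) ^ ((3:ℝ)/2)) x) :
    (∀ τ₁ ∈ Ioo (-ε) ε, ∀ τ₂ ∈ Ioo (-ε) ε,
      2 * sin (α τ₁) ^ ((5:ℝ)/2) * cos (α τ₁) ^ ((1:ℝ)/2) * s τ₁ * t τ₁
        + 5 * c * (s τ₁ * t τ₁ / (s τ₁^2 + t τ₁^2)) * H (α τ₁)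
      = 2 * sin (α τ₂) ^ ((5:ℝ)/2) * cos (α τ₂) ^ ((1:ℝ)/2) * s τ₂ * t τ₂
        + 5 * c * (s τ₂ * t τ₂ / (s τ₂^2 + t τ₂^2)) * H (α τ₂))
    ↔
    (∀ τ ∈ Ioo (-ε) ε,
      5 * (c + (s τ^2 + t τ^2)) * cos (α τ)^2 * (s τ * t τ) * deriv α τ
        - (s τ^2 + t τ^2) * (s τ * t τ) * sin (α τ)^2 * deriv α τ
        + 2 * sin (α τ) * cos (α τ) * (s τ^2 + t τ^2)
          * (s τ * deriv t τ + t τ * deriv s τ) = 0) := by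
  have h0 : (0:ℝ) ∈ Ioo (-ε) ε := ⟨by linarith, hε⟩
  set k : ℝ := s 0 * t 0 / ((s 0)^2 + (t 0)^2) with hk_def
  -- the ratio s*t/(s²+t²) is constant
  have hkτ : ∀ τ ∈ Ioo (-ε) ε, s τ * t τ / (s τ^2 + t τ^2) = k := by
    intro τ hτ
    have h1 := hratio τ hτ 0 h0
    have ht0 := ht 0 h0
    have hs0 := hs 0 h0
    have htτ := ht τ hτ
    have hsτ := hs τ hτ
    have hcross : s τ * t 0 = s 0 * t τ := by
      rw [div_eq_div_iff htτ.ne' ht0.ne'] at h1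
      exact h1
    rw [hk_def, div_eq_div_iff (by positivity) (by positivity)]
    linear_combination (t 0 * t τ - s 0 * s τ) * hcross
  -- notation for F
  set F : ℝ → ℝ := fun x => 2 * sin (α x) ^ ((5:ℝ)/2) * cos (α x) ^ ((1:ℝ)/2) * s x * t x
      + 5 * c * (s x * t x / (s x^2 + t x^2)) * H (α x) with hF_def
  -- derivative of F
  have hFd : ∀ τ ∈ Ioo (-ε) ε, HasDerivAt F
      (((2 * ((5:ℝ)/2 * sin (α τ) ^ ((5:ℝ)/2 - 1) * (cos (α τ) * deriv α τ)) * cos (α τ) ^ ((1:ℝ)/2) +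
            2 * sin (α τ) ^ ((5:ℝ)/2) * ((1:ℝ)/2 * cos (α τ) ^ ((1:ℝ)/2 - 1) * (-sin (α τ) * deriv α τ))) *
          s τ +
          2 * sin (α τ) ^ ((5:ℝ)/2) * cos (α τ) ^ ((1:ℝ)/2) * deriv s τ) * t τ +
        2 * sin (α τ) ^ ((5:ℝ)/2) * cos (α τ) ^ ((1:ℝ)/2) * s τ * deriv t τ +
        5 * c * k * ((cos (α τ) * sin (α τ)) ^ ((3:ℝ)/2) * deriv α τ)) τ := by
    intro τ hτ
    have hτα := hα τ hτ
    have ha : 0 < sin (α τ) := Real.sin_pos_of_pos_of_lt_pi hτα.1 (by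
      have := pi_pos; linarith [hτα.2])
    have hb : 0 < cos (α τ) := Real.cos_pos_of_mem_Ioo ⟨by linarith [hτα.1, pi_pos], hτα.2⟩
    have hα' : HasDerivAt α (deriv α τ) τ := (hαd τ hτ).hasDerivAt
    have hs' : HasDerivAt s (deriv s τ) τ := (hsd τ hτ).hasDerivAt
    have ht' : HasDerivAt t (deriv t τ) τ := (htd τ hτ).hasDerivAt
    have hsin : HasDerivAt (fun x => sin (α x)) (cos (α τ) * deriv α τ) τ :=
      (Real.hasDerivAt_sin (α τ)).comp τ hα'
    have hcos : HasDerivAt (fun x => cos (α x)) (-sin (α τ) * deriv α τ) τ :=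
      (Real.hasDerivAt_cos (α τ)).comp τ hα'
    have hp1 : HasDerivAt (fun x => sin (α x) ^ ((5:ℝ)/2))
        ((5:ℝ)/2 * sin (α τ) ^ ((5:ℝ)/2 - 1) * (cos (α τ) * deriv α τ)) τ :=
      by have := (Real.hasDerivAt_rpow_const (x := sin (α τ)) (p := (5:ℝ)/2) (Or.inl ha.ne')).comp τ hsin; exact this
    have hp2 : HasDerivAt (fun x => cos (α x) ^ ((1:ℝ)/2))
        ((1:ℝ)/2 * cos (α τ) ^ ((1:ℝ)/2 - 1) * (-sin (α τ) * deriv α τ)) τ :=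
      by have := (Real.hasDerivAt_rpow_const (x := cos (α τ)) (p := (1:ℝ)/2) (Or.inl hb.ne')).comp τ hcos; exact this
    have hHc : HasDerivAt (fun x => H (α x)) ((cos (α τ) * sin (α τ)) ^ ((3:ℝ)/2) * deriv α τ) τ :=
      (hH (α τ) hτα).comp τ hα'
    have hG := ((((hp1.const_mul 2).mul hp2).mul hs').mul ht').add (hHc.const_mul (5*c*k))
    refine hG.congr_of_eventuallyEq ?_
    filter_upwards [isOpen_Ioo.mem_nhds hτ] with x hx
    rw [hF_def]
    simp only
    rw [hkτ x hx]
    rfl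
  -- the ODE left-hand side equals (derivative of F) times a positive factor
  have hODE_eq : ∀ τ ∈ Ioo (-ε) ε,
      5 * (c + (s τ^2 + t τ^2)) * cos (α τ)^2 * (s τ * t τ) * deriv α τ
        - (s τ^2 + t τ^2) * (s τ * t τ) * sin (α τ)^2 * deriv α τ
        + 2 * sin (α τ) * cos (α τ) * (s τ^2 + t τ^2)
          * (s τ * deriv t τ + t τ * deriv s τ)
      = (((2 * ((5:ℝ)/2 * sin (α τ) ^ ((5:ℝ)/2 - 1) * (cos (α τ) * deriv α τ)) * cos (α τ) ^ ((1:ℝ)/2) +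
            2 * sin (α τ) ^ ((5:ℝ)/2) * ((1:ℝ)/2 * cos (α τ) ^ ((1:ℝ)/2 - 1) * (-sin (α τ) * deriv α τ))) *
          s τ +
          2 * sin (α τ) ^ ((5:ℝ)/2) * cos (α τ) ^ ((1:ℝ)/2) * deriv s τ) * t τ +
        2 * sin (α τ) ^ ((5:ℝ)/2) * cos (α τ) ^ ((1:ℝ)/2) * s τ * deriv t τ +
        5 * c * k * ((cos (α τ) * sin (α τ)) ^ ((3:ℝ)/2) * deriv α τ))
        * ((s τ^2 + t τ^2) * cos (α τ) ^ ((1:ℝ)/2) * sin (α τ) ^ (-((3:ℝ)/2))) := by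
    intro τ hτ
    have hτα := hα τ hτ
    have ha : 0 < sin (α τ) := Real.sin_pos_of_pos_of_lt_pi hτα.1 (by
      have := pi_pos; linarith [hτα.2])
    have hb : 0 < cos (α τ) := Real.cos_pos_of_mem_Ioo ⟨by linarith [hτα.1, pi_pos], hτα.2⟩
    have hden : (0:ℝ) < s τ^2 + t τ^2 := by
      have := hs τ hτ; have := ht τ hτ; positivity
    have hk' : k = s τ * t τ / (s τ^2 + t τ^2) := (hkτ τ hτ).symm
    rw [hk']
    set a := sin (α τ) with ha_def
    set b := cos (α τ) with hb_def
    set A := a ^ ((1:ℝ)/2) with hA_def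
    set B := b ^ ((1:ℝ)/2) with hB_def
    have hA0 : 0 < A := Real.rpow_pos_of_pos ha _
    have hB0 : 0 < B := Real.rpow_pos_of_pos hb _
    have hAA : A * A = a := by
      rw [hA_def, ← Real.rpow_add ha]; norm_num
    have hBB : B * B = b := by
      rw [hB_def, ← Real.rpow_add hb]; norm_num
    have h52 : a ^ ((5:ℝ)/2) = a ^ 2 * A := by
      rw [hA_def, show (5:ℝ)/2 = 2 + 1/2 by norm_num, Real.rpow_add ha, Real.rpow_two]
    have h32 : a ^ ((5:ℝ)/2 - 1) = a * A := by
      rw [hA_def, show (5:ℝ)/2 - 1 = 1 + 1/2 by norm_num, Real.rpow_add ha, Real.rpow_one]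
    have hbneg : b ^ ((1:ℝ)/2 - 1) = B⁻¹ := by
      rw [hB_def, show (1:ℝ)/2 - 1 = -(1/2) by norm_num, Real.rpow_neg hb.le]
    have hmulba : (b * a) ^ ((3:ℝ)/2) = b * a * (B * A) := by
      rw [hA_def, hB_def, show (3:ℝ)/2 = 1 + 1/2 by norm_num,
        Real.rpow_add (by positivity), Real.rpow_one, Real.mul_rpow hb.le ha.le]
    have haneg : a ^ (-((3:ℝ)/2)) = (a * A)⁻¹ := by
      rw [Real.rpow_neg ha.le, hA_def, show (3:ℝ)/2 = 1 + 1/2 by norm_num,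
        Real.rpow_add ha, Real.rpow_one]
    rw [h52, h32, hbneg, hmulba, haneg]
    rw [show a = A * A from hAA.symm, show b = B * B from hBB.symm]
    field_simp
    ring
  -- positivity of the factor
  have hM : ∀ τ ∈ Ioo (-ε) ε,
      0 < (s τ^2 + t τ^2) * cos (α τ) ^ ((1:ℝ)/2) * sin (α τ) ^ (-((3:ℝ)/2)) := by
    intro τ hτ
    have hτα := hα τ hτ
    have ha : 0 < sin (α τ) := Real.sin_pos_of_pos_of_lt_pi hτα.1 (by
      have := pi_pos; linarith [hτα.2])
    have hb : 0 < cos (α τ) := Real.cos_pos_of_mem_Ioo ⟨by linarith [hτα.1, pi_pos], hτα.2⟩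
    have hsτ := hs τ hτ; have htτ := ht τ hτ
    have h1 : 0 < cos (α τ) ^ ((1:ℝ)/2) := Real.rpow_pos_of_pos hb _
    have h2 : 0 < sin (α τ) ^ (-((3:ℝ)/2)) := Real.rpow_pos_of_pos ha _
    positivity
  constructor
  · intro hconst τ hτ
    have h0' : HasDerivAt F 0 τ := by
      refine (hasDerivAt_const τ (F τ)).congr_of_eventuallyEq ?_
      filter_upwards [isOpen_Ioo.mem_nhds hτ] with x hx
      exact hconst x hx τ hτ
    have hD0 := (hFd τ hτ).unique h0'
    rw [hODE_eq τ hτ, hD0, zero_mul]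
  · intro hode τ₁ hτ₁ τ₂ hτ₂
    have hD0 : ∀ τ ∈ Ioo (-ε) ε, HasDerivAt F 0 τ := by
      intro τ hτ
      have h := hode τ hτ
      rw [hODE_eq τ hτ] at h
      have := (mul_eq_zero.1 h).resolve_right (ne_of_gt (hM τ hτ))
      have h' := hFd τ hτ
      rwa [this] at h'
    have key : ∀ p ∈ Ioo (-ε) ε, ∀ q ∈ Ioo (-ε) ε, p ≤ q → F q = F p := by
      intro p hp q hq hpq
      have hsub : Icc p q ⊆ Ioo (-ε) ε := fun x hx =>
        ⟨lt_of_lt_of_le hp.1 hx.1, lt_of_le_of_lt hx.2 hq.2⟩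
      have := constant_of_has_deriv_right_zero (f := F) (a := p) (b := q)
        (fun x hx => (hD0 x (hsub hx)).continuousAt.continuousWithinAt)
        (fun x hx => (hD0 x (hsub (Ico_subset_Icc_self hx))).hasDerivWithinAt)
      exact this q (right_mem_Icc.2 hpq)
    show F τ₁ = F τ₂
    rcases le_total τ₁ τ₂ with h | h
    · exact (key τ₁ hτ₁ τ₂ hτ₂ h).symm
    · exact key τ₂ hτ₂ τ₁ hτ₁ h
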